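/- Assume m_0 ≤ m_1 ≤ … ≤ m_{n-1}. Then for every integer a with 1 ≤ a < M_k, the number of indices i ∈ {0,…,n-1} with a mod m_i ≠ 0 is at least n − k + 1. (Minimum Hamming weight bound for integer Chinese remainder codes.) -/

import Mathlib

open Finset

/-- Minimum Hamming weight bound for integer Chinese remainder codes:
if `m₀ ≤ m₁ ≤ … ≤ m_{n-1}` then every integer `a` with `1 ≤ a < M_k` has at
least `n − k + 1` nonzero residues `a mod mᵢ`. -/
theorem integer_crt_code_min_hamming_weight
    (n : ℕ) (hn : 1 ≤ n) (m : ℕ → ℕ)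
    (hpos : ∀ i < n, 0 < m i)
    (hcop : ∀ i < n, ∀ j < n, i ≠ j → Nat.Coprime (m i) (m j))
    (k : ℕ) (hk1 : 1 ≤ k) (hkn : k ≤ n)
    (hord : ∀ i j, i ≤ j → j < n → m i ≤ m j) :
    ∀ a : ℕ, 1 ≤ a → a < ∏ i ∈ Finset.range k, m i →
      n - k + 1 ≤ ((Finset.range n).filter (fun i => a % m i ≠ 0)).card := by
  intro a ha haM
  classical
  set S : Finset ℕ := (Finset.range n).filter (fun i => a % m i = 0) with hS
  have hSsub : S ⊆ Finset.range n := Finset.filter_subset _ _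
  have hdvd : (∏ i ∈ S, m i) ∣ a := by
    apply Finset.prod_dvd_of_isRelPrime
    · intro i hi j hj hij
      have hi' : i < n := Finset.mem_range.mp (hSsub hi)
      have hj' : j < n := Finset.mem_range.mp (hSsub hj)
      exact Nat.coprime_iff_isRelPrime.mp (hcop i hi' j hj' hij)
    · intro i hi
      exact Nat.dvd_of_mod_eq_zero (Finset.mem_filter.mp hi).2
  have hprodle : (∏ i ∈ S, m i) ≤ a := Nat.le_of_dvd ha hdvd
  have hcard : S.card < k := by
    by_contra hge
    push_neg at hge
    let e := S.orderIsoOfFin rfl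
    let f : ℕ → ℕ := fun j => if h : j < S.card then (e ⟨j, h⟩ : ℕ) else j + n
    have hfS : ∀ j < S.card, f j ∈ S := by
      intro j hj
      simp only [f, dif_pos hj]
      exact (e ⟨j, hj⟩).2
    have hmono : StrictMonoOn f (Set.Iio S.card) := by
      intro i hi j hj hij
      simp only [Set.mem_Iio] at hi hj
      simp only [f, dif_pos hi, dif_pos hj]
      have : (⟨i, hi⟩ : Fin S.card) < ⟨j, hj⟩ := hij
      exact_mod_cast e.lt_iff_lt.mpr this
    have hle : ∀ j < S.card, j ≤ f j := by
      intro j hj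
      induction j with
      | zero => exact Nat.zero_le _
      | succ i ih =>
        have h1 : i < S.card := Nat.lt_of_succ_lt hj
        have := hmono (Set.mem_Iio.mpr h1) (Set.mem_Iio.mpr hj) (Nat.lt_succ_self i)
        have := ih h1
        omega
    have hfn : ∀ j < S.card, f j < n := fun j hj =>
      Finset.mem_range.mp (hSsub (hfS j hj))
    have h1 : ∏ j ∈ Finset.range k, m j ≤ ∏ j ∈ Finset.range k, m (f j) := by
      apply Finset.prod_le_prod
      · intro j _; exact Nat.zero_le _
      · intro j hj
        have hj' : j < S.card := lt_of_lt_of_le (Finset.mem_range.mp hj) hge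
        exact hord j (f j) (hle j hj') (hfn j hj')
    have hinj : Set.InjOn f (Finset.range k) := by
      intro i hi j hj hij
      by_contra hne
      have hi' : i < S.card := lt_of_lt_of_le (Finset.mem_range.mp (by simpa using hi)) hge
      have hj' : j < S.card := lt_of_lt_of_le (Finset.mem_range.mp (by simpa using hj)) hge
      rcases Nat.lt_or_ge i j with h | h
      · exact absurd hij (hmono (Set.mem_Iio.mpr hi') (Set.mem_Iio.mpr hj') h).ne
      · have hji : j < i := by omega
        exact absurd hij.symm (hmono (Set.mem_Iio.mpr hj') (Set.mem_Iio.mpr hi') hji).ne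
    have h2 : ∏ j ∈ Finset.range k, m (f j) ≤ ∏ i ∈ S, m i := by
      rw [← Finset.prod_image (fun i hi j hj => hinj (by simpa using hi) (by simpa using hj))]
      apply Finset.prod_le_prod_of_subset_of_one_le'
      · intro x hx
        obtain ⟨j, hj, rfl⟩ := Finset.mem_image.mp hx
        exact hfS j (lt_of_lt_of_le (Finset.mem_range.mp hj) hge)
      · intro i hi _
        exact hpos i (Finset.mem_range.mp (hSsub hi))
    omega
  have hsplit := Finset.card_filter_add_card_filter_not
    (s := Finset.range n) (p := fun i => a % m i = 0)
  simp only [Finset.card_range, ← hS] at hsplit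
  simp only [ne_eq]
  omega
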